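/- In the exact-data setting of the TGSS method: let z ∈ B solve F(z) = y, let z_k ∈ B with r_k = F(z_k) - y ≠ 0, u = F'(z_k)* r_k ≠ 0. If x' = z_k - ((1-η)‖r_k‖²/‖u‖²)·u (the projection of z_k onto the hyperplane ⟨u,·⟩ = α+ξ with α, ξ as in the exact-data stripe definition), then ‖z - x'‖² ≤ ‖z - z_k‖² - (1-η)²‖r_k‖⁴/‖u‖². -/

import Mathlib

open RealInnerProductSpace

theorem tgss_descent_exact
    {X Y : Type*} [NormedAddCommGroup X] [InnerProductSpace ℝ X] [CompleteSpace X]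
    [NormedAddCommGroup Y] [InnerProductSpace ℝ Y] [CompleteSpace Y]
    (B : Set X) (F : X → Y) (F' : X → X →L[ℝ] Y) (η : ℝ) (hη0 : 0 < η) (hη1 : η < 1)
    (htc : ∀ x ∈ B, ∀ xt ∈ B, ‖F x - F xt - F' x (x - xt)‖ ≤ η * ‖F x - F xt‖)
    (y : Y) (z : X) (hz : z ∈ B) (hsol : F z = y)
    (zk : X) (hzk : zk ∈ B)
    (rk : Y) (hrk : rk = F zk - y) (hrk0 : rk ≠ 0)
    (u : X) (hu : u = (F' zk).adjoint rk) (hu0 : u ≠ 0)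
    (x' : X) (hx' : x' = zk - (((1 - η) * ‖rk‖ ^ 2) / ‖u‖ ^ 2) • u) :
    ‖z - x'‖ ^ 2 ≤ ‖z - zk‖ ^ 2 - (1 - η) ^ 2 * ‖rk‖ ^ 4 / ‖u‖ ^ 2 := by
  set t : ℝ := ((1 - η) * ‖rk‖ ^ 2) / ‖u‖ ^ 2 with ht
  have hun : (0:ℝ) < ‖u‖ := norm_pos_iff.mpr hu0
  have ht0 : 0 ≤ t := div_nonneg (mul_nonneg (by linarith) (sq_nonneg _)) (sq_nonneg _)
  -- key inner product bound
  have hFz : F zk - F z = rk := by rw [hrk, hsol]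
  have hw := htc zk hzk z hz
  rw [hFz] at hw
  have hinner : ⟪u, z - zk⟫ ≤ -((1 - η) * ‖rk‖ ^ 2) := by
    have h1 : ⟪u, z - zk⟫ = ⟪rk, F' zk (z - zk)⟫ := by
      rw [hu, ContinuousLinearMap.adjoint_inner_left]
    have h2 : F' zk (z - zk) = (rk - F' zk (zk - z)) - rk := by
      have : z - zk = -(zk - z) := by abel
      rw [this, map_neg]; abel
    have h3 : ⟪rk, F' zk (z - zk)⟫ = ⟪rk, rk - F' zk (zk - z)⟫ - ‖rk‖ ^ 2 := by
      rw [h2, inner_sub_right, real_inner_self_eq_norm_sq]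
    have h4 : ⟪rk, rk - F' zk (zk - z)⟫ ≤ η * ‖rk‖ ^ 2 := by
      calc ⟪rk, rk - F' zk (zk - z)⟫ ≤ ‖rk‖ * ‖rk - F' zk (zk - z)‖ :=
            real_inner_le_norm _ _
        _ ≤ ‖rk‖ * (η * ‖rk‖) := by
            apply mul_le_mul_of_nonneg_left _ (norm_nonneg _)
            exact hw
        _ = η * ‖rk‖ ^ 2 := by ring
    rw [h1, h3]
    nlinarith
  have hzx : z - x' = (z - zk) + t • u := by rw [hx']; abel
  have hexp : ‖z - x'‖ ^ 2 = ‖z - zk‖ ^ 2 + 2 * (t * ⟪u, z - zk⟫) + t ^ 2 * ‖u‖ ^ 2 := by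
    rw [hzx, norm_add_sq_real, real_inner_smul_right, norm_smul]
    rw [real_inner_comm]
    simp [abs_of_nonneg ht0]
    ring
  rw [hexp]
  have htu : t * ‖u‖ ^ 2 = (1 - η) * ‖rk‖ ^ 2 := by
    rw [ht, div_mul_cancel₀ _ (pow_pos hun 2).ne']
  have hmul : t * ⟪u, z - zk⟫ ≤ t * (-((1 - η) * ‖rk‖ ^ 2)) :=
    mul_le_mul_of_nonneg_left hinner ht0
  have hrhs : (1 - η) ^ 2 * ‖rk‖ ^ 4 / ‖u‖ ^ 2 = t * ((1 - η) * ‖rk‖ ^ 2) := by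
    rw [ht]; ring
  nlinarith [sq_nonneg t, sq_nonneg ‖u‖]
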